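/- For all sufficiently large m, −(q/log 2)·W_{−1}(−(log 2/q)·2^{−m/q}) < q'·(√(2(m/q' + log q' − 1)) + m/q' + log q'), where q' = q/log 2 and q = (d+1)m(m−1)/2 for fixed d ≥ 3; consequently the VC dimension upper bound from the shatter coefficient bound S(n) ≤ 2^m n^q is O(m² log m) as m → ∞. -/

import Mathlib

noncomputable section

/-- The lower real branch `W₋₁` of the Lambert W function: for
`x ∈ [-1/e, 0)` it is the smallest real solution `y` of `y * exp y = x`
(the solution with `y ≤ -1`). -/
noncomputable def Wm1 (x : ℝ) : ℝ := sInf {y : ℝ | y * Real.exp y = x}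

/-- `q = (d+1) m (m-1) / 2`. -/
noncomputable def qFn (d m : ℕ) : ℝ := ((d : ℝ) + 1) * m * (m - 1) / 2

/-- `q' = q / log 2`. -/
noncomputable def qFn' (d m : ℕ) : ℝ := qFn d m / Real.log 2

/-- The Lambert-function upper bound for the VC dimension obtained from the
shatter coefficient bound `S(n) ≤ 2^m n^q`. -/
noncomputable def lambertBound (d m : ℕ) : ℝ :=
  -(qFn d m / Real.log 2) *
    Wm1 (-(Real.log 2 / qFn d m) * (2 : ℝ) ^ (-((m : ℝ) / qFn d m)))

lemma wm1_bounds (x B : ℝ) (hB : 1 ≤ B) (hx : x < 0)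
    (hxB : x < -B * Real.exp (-B)) : -B ≤ Wm1 x ∧ Wm1 x ≤ 0 := by
  have hanti : StrictAntiOn (fun t : ℝ => t * Real.exp t) (Set.Iic (-1)) := by
    apply strictAntiOn_of_deriv_neg (convex_Iic _)
    · exact (continuous_id.mul Real.continuous_exp).continuousOn
    · intro t ht
      rw [interior_Iic] at ht
      have hd : HasDerivAt (fun t : ℝ => t * Real.exp t)
          (1 * Real.exp t + t * Real.exp t) t :=
        (hasDerivAt_id t).mul (Real.hasDerivAt_exp t)
      rw [hd.deriv]
      have h1 := Real.exp_pos t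
      have h2 : t < -1 := ht
      nlinarith
  have hlb : ∀ y ∈ {y : ℝ | y * Real.exp y = x}, -B ≤ y := by
    intro y hy
    by_contra hc
    push_neg at hc
    have h1 : y ∈ Set.Iic (-1 : ℝ) := by simp; linarith
    have h2 : (-B : ℝ) ∈ Set.Iic (-1 : ℝ) := by simp; linarith
    have := hanti h1 h2 hc
    simp only [Set.mem_setOf_eq] at hy
    simp only at this
    rw [hy] at this
    linarith
  have hbdd : BddBelow {y : ℝ | y * Real.exp y = x} := ⟨-B, hlb⟩
  by_cases hne : {y : ℝ | y * Real.exp y = x}.Nonempty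
  · constructor
    · exact le_csInf hne hlb
    · obtain ⟨y, hy⟩ := hne
      have hy0 : y ≤ 0 := by
        by_contra h
        push_neg at h
        have := Real.exp_pos y
        simp only [Set.mem_setOf_eq] at hy
        nlinarith
      exact le_trans (csInf_le hbdd hy) hy0
  · rw [Set.not_nonempty_iff_eq_empty] at hne
    unfold Wm1
    rw [hne, Real.sInf_empty]
    constructor <;> linarith

set_option maxHeartbeats 1000000 in
lemma main_est (d m : ℕ) (hd : 3 ≤ d) (hm : Real.exp 2048 ≤ (m : ℝ)) :
    (lambertBound d m < qFn' d m *
        (Real.sqrt (2 * ((m : ℝ) / qFn' d m + Real.log (qFn' d m) - 1))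
          + (m : ℝ) / qFn' d m + Real.log (qFn' d m))) ∧
    0 ≤ lambertBound d m ∧
    lambertBound d m ≤
      (2 * ((d : ℝ) + 1) * (3 + Real.log ((d : ℝ) + 1))) * ((m : ℝ) ^ 2 * Real.log m) := by
  have hd4 : (4 : ℝ) ≤ (d : ℝ) + 1 := by
    have : (3 : ℝ) ≤ (d : ℝ) := by exact_mod_cast hd
    linarith
  have hm2 : (2 : ℝ) ≤ (m : ℝ) := by
    have := Real.add_one_le_exp (2048 : ℝ)
    linarith
  have hmpos : (0 : ℝ) < (m : ℝ) := by linarith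
  have hlogm : (2048 : ℝ) ≤ Real.log m := by
    rw [Real.le_log_iff_exp_le hmpos]; exact hm
  have hlog2pos : (0 : ℝ) < Real.log 2 := Real.log_pos one_lt_two
  have hlog2lt : Real.log 2 < 1 := by
    have := Real.log_two_lt_d9; linarith
  have hlog2gt : (1 / 2 : ℝ) < Real.log 2 := by
    have := Real.log_two_gt_d9; linarith
  obtain ⟨q, hqdef⟩ : ∃ q : ℝ, q = qFn d m := ⟨_, rfl⟩
  have hq : (m : ℝ) ^ 2 ≤ q := by
    rw [hqdef]; unfold qFn
    have h1 : (4 : ℝ) * ((m : ℝ) - 1) ≤ ((d : ℝ) + 1) * ((m : ℝ) - 1) := by nlinarith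
    nlinarith
  have hqpos : (0 : ℝ) < q := by nlinarith
  obtain ⟨Q, hQdef⟩ : ∃ Q : ℝ, Q = qFn' d m := ⟨_, rfl⟩
  have hQeq : Q = q / Real.log 2 := by rw [hQdef, hqdef]; rfl
  have hQpos : (0 : ℝ) < Q := by rw [hQeq]; positivity
  have hqQ : q ≤ Q := by
    rw [hQeq, le_div_iff₀ hlog2pos]; nlinarith
  have hQub : Q ≤ ((d : ℝ) + 1) * (m : ℝ) ^ 2 := by
    rw [hQeq, div_le_iff₀ hlog2pos]
    have hqub : q ≤ ((d : ℝ) + 1) * (m : ℝ) ^ 2 / 2 := by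
      rw [hqdef]; unfold qFn; nlinarith
    nlinarith
  obtain ⟨a, hadef⟩ : ∃ a : ℝ, a = (m : ℝ) / Q + Real.log Q := ⟨_, rfl⟩
  have hmQ : (m : ℝ) / Q ≤ 1 := by
    rw [div_le_one hQpos]; nlinarith
  have hmQ0 : (0 : ℝ) ≤ (m : ℝ) / Q := by positivity
  have hlogQ : (4096 : ℝ) ≤ Real.log Q := by
    have h1 : (m : ℝ) ^ 2 ≤ Q := le_trans hq hqQ
    have h2 : Real.log ((m : ℝ) ^ 2) ≤ Real.log Q := by
      apply Real.log_le_log (by positivity) h1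
    rw [Real.log_pow] at h2
    push_cast at h2
    linarith
  have ha : (4096 : ℝ) ≤ a := by rw [hadef]; linarith
  obtain ⟨s, hsdef⟩ : ∃ s : ℝ, s = Real.sqrt (Real.sqrt a) := ⟨_, rfl⟩
  have ha0 : (0 : ℝ) ≤ a := by linarith
  have hsqa0 : (0 : ℝ) ≤ Real.sqrt a := Real.sqrt_nonneg a
  have hs2 : s ^ 2 = Real.sqrt a := by rw [hsdef]; exact Real.sq_sqrt hsqa0
  have hs4 : (s ^ 2) ^ 2 = a := by rw [hs2]; exact Real.sq_sqrt ha0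
  have hs8 : (8 : ℝ) ≤ s := by
    have hs4096 : Real.sqrt 4096 = 64 := by
      rw [show (4096 : ℝ) = 64 ^ 2 by norm_num]
      exact Real.sqrt_sq (by norm_num)
    have h64 : (64 : ℝ) ≤ Real.sqrt a := by
      rw [← hs4096]; exact Real.sqrt_le_sqrt ha
    have hs0 : (0 : ℝ) ≤ s := by rw [hsdef]; exact Real.sqrt_nonneg _
    nlinarith [hs2]
  have hspos : (0 : ℝ) < s := by linarith
  have hsa_le_a : Real.sqrt a ≤ a := by
    calc Real.sqrt a ≤ Real.sqrt (a ^ 2) := Real.sqrt_le_sqrt (by nlinarith)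
      _ = a := Real.sqrt_sq ha0
  obtain ⟨B, hBdef⟩ : ∃ B : ℝ, B = a + Real.sqrt a := ⟨_, rfl⟩
  have hBpos : (0 : ℝ) < B := by rw [hBdef]; nlinarith
  have hB1 : (1 : ℝ) ≤ B := by rw [hBdef]; nlinarith
  have hlogB : Real.log B < Real.sqrt a := by
    have h1 : B ≤ a ^ 2 := by rw [hBdef]; nlinarith
    have h2 : Real.log B ≤ Real.log (a ^ 2) := Real.log_le_log hBpos h1
    have h3 : Real.log (a ^ 2) = 2 * Real.log a := by
      rw [Real.log_pow]; push_cast; ring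
    have h4 : Real.log a = 4 * Real.log s := by
      rw [← hs4]; rw [Real.log_pow, Real.log_pow]; push_cast; ring
    have h5 : Real.log s ≤ s - 1 := Real.log_le_sub_one_of_pos hspos
    nlinarith [hs2]
  have hx2 : (2 : ℝ) ^ (-((m : ℝ) / q)) = Real.exp (-((m : ℝ) / Q)) := by
    rw [Real.rpow_def_of_pos two_pos]
    congr 1
    have : (m : ℝ) / Q = Real.log 2 * ((m : ℝ) / q) := by
      rw [hQeq]; field_simp
    rw [this]; ring
  have hxeq : -(Real.log 2 / q) * (2 : ℝ) ^ (-((m : ℝ) / q)) = -Real.exp (-a) := by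
    rw [hx2]
    have h1 : Real.log 2 / q = 1 / Q := by
      rw [hQeq]; field_simp
    rw [h1]
    have h2 : (1 : ℝ) / Q = Real.exp (-Real.log Q) := by
      rw [Real.exp_neg, Real.exp_log hQpos, one_div]
    rw [h2, neg_mul, ← Real.exp_add, hadef]
    congr 1
    ring
  have hxneg : -Real.exp (-a) < 0 := by
    have := Real.exp_pos (-a); linarith
  have hxB : -Real.exp (-a) < -B * Real.exp (-B) := by
    have hBe : B = Real.exp (Real.log B) := (Real.exp_log hBpos).symm
    have h1 : B * Real.exp (-B) = Real.exp (Real.log B + -B) := by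
      rw [Real.exp_add, ← hBe]
    have h2 : Real.log B + -B < -a := by
      have hBv : B = a + Real.sqrt a := hBdef
      linarith
    have h3 : B * Real.exp (-B) < Real.exp (-a) := by
      rw [h1]; exact Real.exp_lt_exp.mpr h2
    linarith
  obtain ⟨hW1, hW2⟩ := wm1_bounds (-Real.exp (-a)) B hB1 hxneg hxB
  have hLB : lambertBound d m = -Q * Wm1 (-Real.exp (-a)) := by
    unfold lambertBound
    rw [← hqdef, ← hQeq, hxeq]
  have hQB : lambertBound d m ≤ Q * B := by
    rw [hLB]; nlinarith
  refine ⟨?_, ?_, ?_⟩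
  · rw [← hQdef]
    have harw : (m : ℝ) / Q + Real.log Q = a := hadef.symm
    rw [harw]
    have hsq : Real.sqrt a < Real.sqrt (2 * (a - 1)) := by
      apply Real.sqrt_lt_sqrt ha0; linarith
    have h2 : Q * B < Q * (Real.sqrt (2 * (a - 1)) + (m : ℝ) / Q + Real.log Q) := by
      apply mul_lt_mul_of_pos_left _ hQpos
      have hBv : B = a + Real.sqrt a := hBdef
      have hav : a = (m : ℝ) / Q + Real.log Q := hadef
      linarith
    linarith
  · rw [hLB]; nlinarith
  · have hBa : B ≤ 2 * a := by
      have hBv : B = a + Real.sqrt a := hBdef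
      linarith
    have hlogd : (0 : ℝ) ≤ Real.log ((d : ℝ) + 1) := Real.log_nonneg (by linarith)
    have hLm : (1 : ℝ) ≤ Real.log m := by linarith
    have haU : a ≤ (3 + Real.log ((d : ℝ) + 1)) * Real.log m := by
      have h1 : Real.log Q ≤ Real.log (((d : ℝ) + 1) * (m : ℝ) ^ 2) :=
        Real.log_le_log hQpos hQub
      rw [Real.log_mul (by positivity) (by positivity), Real.log_pow] at h1
      push_cast at h1
      have hav : a = (m : ℝ) / Q + Real.log Q := hadef
      nlinarith
    have e1 : Q * B ≤ Q * (2 * a) := mul_le_mul_of_nonneg_left hBa hQpos.le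
    have h2a : (0 : ℝ) ≤ 2 * a := by linarith
    have e2 : Q * (2 * a) ≤ (((d : ℝ) + 1) * (m : ℝ) ^ 2) * (2 * a) :=
      mul_le_mul_of_nonneg_right hQub h2a
    have h2b : 2 * a ≤ 2 * ((3 + Real.log ((d : ℝ) + 1)) * Real.log m) := by linarith
    have hdm0 : (0 : ℝ) ≤ ((d : ℝ) + 1) * (m : ℝ) ^ 2 := by positivity
    have e3 : (((d : ℝ) + 1) * (m : ℝ) ^ 2) * (2 * a) ≤
        (((d : ℝ) + 1) * (m : ℝ) ^ 2) * (2 * ((3 + Real.log ((d : ℝ) + 1)) * Real.log m)) :=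
      mul_le_mul_of_nonneg_left h2b hdm0
    have e4 : (((d : ℝ) + 1) * (m : ℝ) ^ 2) * (2 * ((3 + Real.log ((d : ℝ) + 1)) * Real.log m))
        = (2 * ((d : ℝ) + 1) * (3 + Real.log ((d : ℝ) + 1))) * ((m : ℝ) ^ 2 * Real.log m) := by
      ring
    linarith

/-- For fixed `d ≥ 3`, with `q = (d+1)m(m-1)/2` and `q' = q / log 2`: for all
sufficiently large `m` the Lambert bound is less than
`q' * (√(2 (m/q' + log q' - 1)) + m/q' + log q')`; consequently the Lambert
bound is `O(m² log m)` as `m → ∞`. -/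
theorem lambertBound_lt_explicit_and_isBigO (d : ℕ) (hd : 3 ≤ d) :
    (∃ M : ℕ, ∀ m : ℕ, M ≤ m →
      lambertBound d m < qFn' d m *
        (Real.sqrt (2 * ((m : ℝ) / qFn' d m + Real.log (qFn' d m) - 1))
          + (m : ℝ) / qFn' d m + Real.log (qFn' d m))) ∧
    (fun m : ℕ => lambertBound d m)
      =O[Filter.atTop] (fun m : ℕ => (m : ℝ) ^ 2 * Real.log m) := by
  set M : ℕ := ⌈Real.exp 2048⌉₊ with hMdef
  have hM : ∀ m : ℕ, M ≤ m → Real.exp 2048 ≤ (m : ℝ) := by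
    intro m h
    calc Real.exp 2048 ≤ (M : ℕ) := Nat.le_ceil _
      _ ≤ (m : ℝ) := by exact_mod_cast h
  constructor
  · exact ⟨M, fun m h => (main_est d m hd (hM m h)).1⟩
  · rw [Asymptotics.isBigO_iff]
    refine ⟨2 * ((d : ℝ) + 1) * (3 + Real.log ((d : ℝ) + 1)), ?_⟩
    rw [Filter.eventually_atTop]
    refine ⟨M, fun m h => ?_⟩
    obtain ⟨_, h0, h1⟩ := main_est d m hd (hM m h)
    have hm1 : (1 : ℝ) ≤ (m : ℝ) := by
      have h2 : (1 : ℝ) ≤ Real.exp 2048 := Real.one_le_exp (by norm_num)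
      linarith [hM m h]
    have hg0 : (0 : ℝ) ≤ (m : ℝ) ^ 2 * Real.log m :=
      mul_nonneg (sq_nonneg _) (Real.log_nonneg hm1)
    rw [Real.norm_eq_abs, Real.norm_eq_abs, abs_of_nonneg h0, abs_of_nonneg hg0]
    exact h1
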